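/- Let (X,μ,T) be an ergodic G-system and let G_1 ⊴ G be a normal subgroup of finite index. Then there is a finite measurable partition P of X into sets of equal measure, each of which is invariant (mod μ) under T^h for every h ∈ G_1, such that for each cell P ∈ P the restricted action of G_1 on (P, μ|_P) is ergodic (every measurable A ⊆ P with μ|_P(T^h A Δ A) = 0 for all h ∈ G_1 has μ|_P(A) ∈ {0,1}). -/

import Mathlib

open MeasureTheory

theorem stmt5 {G X : Type*} [Group G] [MeasurableSpace X] [StandardBorelSpace X]
    (μ : Measure X) [IsProbabilityMeasure μ]
    -- a measurable μ-preserving action T of G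
    (T : G → X → X) (hT1 : T 1 = id) (hTmul : ∀ g k : G, T (g * k) = T g ∘ T k)
    (hTmp : ∀ g : G, MeasurePreserving (T g) μ μ)
    -- ergodicity of the G-action
    (herg : ∀ A : Set X, MeasurableSet A →
      (∀ g : G, μ (symmDiff (T g ⁻¹' A) A) = 0) → μ A = 0 ∨ μ A = 1)
    -- a normal subgroup of finite index
    (G₁ : Subgroup G) (hnorm : G₁.Normal) (hfin : G₁.index ≠ 0) :
    ∃ (n : ℕ) (P : Fin n → Set X), 0 < n ∧
      (∀ i, MeasurableSet (P i)) ∧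
      -- a partition of X (mod μ)
      (∀ i j, i ≠ j → μ (P i ∩ P j) = 0) ∧
      μ (⋃ i, P i) = 1 ∧
      -- into sets of equal measure
      (∀ i j, μ (P i) = μ (P j)) ∧
      -- each invariant (mod μ) under T^h for every h ∈ G₁
      (∀ i, ∀ h ∈ G₁, μ (symmDiff (T h ⁻¹' (P i)) (P i)) = 0) ∧
      -- such that the restricted G₁-action on each cell is ergodic for μ|_P
      (∀ i, ∀ A : Set X, A ⊆ P i → MeasurableSet A →
        (∀ h ∈ G₁, ProbabilityTheory.cond μ (P i) (symmDiff (T h ⁻¹' A) A) = 0) →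
        ProbabilityTheory.cond μ (P i) A = 0 ∨ ProbabilityTheory.cond μ (P i) A = 1) := by
  classical
  haveI := hnorm
  haveI : G₁.FiniteIndex := ⟨hfin⟩
  haveI : Finite (G ⧸ G₁) := G₁.finite_quotient_of_finiteIndex
  haveI : Fintype (G ⧸ G₁) := Fintype.ofFinite _
  -- basics about the action
  have hmeas : ∀ g : G, Measurable (T g) := fun g => (hTmp g).measurable
  have hpre : ∀ (g k : G) (A : Set X), T g ⁻¹' (T k ⁻¹' A) = T (k * g) ⁻¹' A := by
    intro g k A
    rw [hTmul k g, Set.preimage_comp]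
  have hmeasP : ∀ (A : Set X), MeasurableSet A → ∀ g : G, μ (T g ⁻¹' A) = μ A :=
    fun A hA g => (hTmp g).measure_preimage hA.nullMeasurableSet
  -- the invariance predicate
  set Inv : Set X → Prop :=
    fun A => MeasurableSet A ∧ ∀ h ∈ G₁, T h ⁻¹' A =ᵐ[μ] A with hInvDef
  -- preimages of an invariant set along the same coset are a.e. equal
  have hcoset : ∀ A : Set X, Inv A → ∀ g g' : G,
      (g : G ⧸ G₁) = (g' : G ⧸ G₁) → T g' ⁻¹' A =ᵐ[μ] T g ⁻¹' A := by
    intro A hA g g' hgg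
    have hmem : g⁻¹ * g' ∈ G₁ := QuotientGroup.eq.mp hgg
    have hmem2 : g * (g⁻¹ * g') * g⁻¹ ∈ G₁ := hnorm.conj_mem _ hmem g
    have h1 : g' = (g * (g⁻¹ * g') * g⁻¹) * g := by group
    have h2 : T g' ⁻¹' A = T g ⁻¹' (T (g * (g⁻¹ * g') * g⁻¹) ⁻¹' A) := by
          rw [hpre, ← h1]
    rw [h2]
    exact (hTmp g).quasiMeasurePreserving.preimage_ae_eq (hA.2 _ hmem2)
  -- preimages of invariant sets are invariant (uses normality)
  have hInvPre : ∀ A : Set X, Inv A → ∀ g : G, Inv (T g ⁻¹' A) := by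
    intro A hA g
    refine ⟨hmeas g hA.1, fun h hh => ?_⟩
    rw [hpre h g A]
    exact hcoset A hA g (g * h) (by rw [QuotientGroup.eq]; simpa using hh)
  -- Inv is closed under intersections and differences
  have hInvInter : ∀ A B : Set X, Inv A → Inv B → Inv (A ∩ B) := by
    intro A B hA hB
    exact ⟨hA.1.inter hB.1, fun h hh => by
      rw [Set.preimage_inter]; exact (hA.2 h hh).inter (hB.2 h hh)⟩
  have hInvDiff : ∀ A B : Set X, Inv A → Inv B → Inv (A \ B) := by
    intro A B hA hB
    exact ⟨hA.1.diff hB.1, fun h hh => by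
      rw [Set.preimage_diff]; exact (hA.2 h hh).diff (hB.2 h hh)⟩
  -- the union of the copies of a nonnull invariant set over all cosets has full measure
  have hBig : ∀ A : Set X, Inv A → μ A ≠ 0 →
      μ (⋃ q : G ⧸ G₁, T (Quotient.out q) ⁻¹' A) = 1 := by
    intro A hA hA0
    set B := ⋃ q : G ⧸ G₁, T (Quotient.out q) ⁻¹' A with hB
    have hBmeas : MeasurableSet B := MeasurableSet.iUnion fun q => hmeas _ hA.1
    have hBinv : ∀ k : G, T k ⁻¹' B =ᵐ[μ] B := by
      intro k
      have h1 : T k ⁻¹' B = ⋃ q : G ⧸ G₁, T (Quotient.out q * k) ⁻¹' A := by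
        rw [hB, Set.preimage_iUnion]
        exact Set.iUnion_congr fun q => hpre k _ A
      have h3 : (⋃ q : G ⧸ G₁, T (Quotient.out (q * (k : G ⧸ G₁))) ⁻¹' A) = B := by
        rw [hB]
        exact (Equiv.mulRight (k : G ⧸ G₁)).surjective.iUnion_comp
          fun q => T (Quotient.out q) ⁻¹' A
      rw [h1, ← h3]
      refine EventuallyEq.countable_iUnion fun q => ?_
      refine hcoset A hA _ _ ?_
      rw [QuotientGroup.out_eq', QuotientGroup.mk_mul, QuotientGroup.out_eq']
    have := herg B hBmeas fun g => measure_symmDiff_eq_zero_iff.mpr (hBinv g)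
    rcases this with h0 | h1
    · exfalso
      apply hA0
      have hsub : μ (T (Quotient.out ((1 : G) : G ⧸ G₁)) ⁻¹' A) ≤ μ B :=
        measure_mono (Set.subset_iUnion
          (fun q : G ⧸ G₁ => T (Quotient.out q) ⁻¹' A) (((1 : G) : G ⧸ G₁)))
      rw [hmeasP A hA.1, h0, nonpos_iff_eq_zero] at hsub
      exact hsub
    · exact h1
  -- lower bound on the measure of nonnull invariant sets
  have hlow : ∀ A : Set X, Inv A → μ A ≠ 0 → 1 ≤ (G₁.index : ENNReal) * μ A := by
    intro A hA hA0
    have h1 := hBig A hA hA0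
    have h2 : μ (⋃ q : G ⧸ G₁, T (Quotient.out q) ⁻¹' A) ≤
        ∑ q : G ⧸ G₁, μ (T (Quotient.out q) ⁻¹' A) :=
      measure_iUnion_fintype_le μ _
    rw [h1] at h2
    calc (1 : ENNReal) ≤ ∑ q : G ⧸ G₁, μ (T (Quotient.out q) ⁻¹' A) := h2
      _ = ∑ _q : G ⧸ G₁, μ A := by
          exact Finset.sum_congr rfl fun q _ => hmeasP A hA.1 _
      _ = (G₁.index : ENNReal) * μ A := by
          rw [Finset.sum_const, nsmul_eq_mul]
          congr 1
          rw [Nat.cast_inj, Finset.card_univ]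
          rw [Subgroup.index, Nat.card_eq_fintype_card]
  -- the infimum of measures of nonnull invariant sets
  set V : Set ENNReal := {v | ∃ A : Set X, Inv A ∧ μ A ≠ 0 ∧ μ A = v} with hV
  set α : ENNReal := sInf V with hα
  have hUnivInv : Inv Set.univ := ⟨MeasurableSet.univ, fun h _ => by simp⟩
  have hα1 : α ≤ 1 := sInf_le ⟨Set.univ, hUnivInv, by simp, by simp⟩
  have hαle : ∀ A : Set X, Inv A → μ A ≠ 0 → α ≤ μ A :=
    fun A hA h0 => sInf_le ⟨A, hA, h0, rfl⟩
  have hm0 : (G₁.index : ENNReal) ≠ 0 := by simpa using hfin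
  have hmtop : (G₁.index : ENNReal) ≠ ⊤ := ENNReal.natCast_ne_top _
  have hαpos : α ≠ 0 := by
    intro h0
    have hlt : sInf V < (G₁.index : ENNReal)⁻¹ := by
      rw [← hα, h0]
      simp [ENNReal.inv_pos.mpr hmtop, pos_iff_ne_zero.mp (ENNReal.inv_pos.mpr hmtop)]
    obtain ⟨v, hvV, hv⟩ := sInf_lt_iff.mp hlt
    obtain ⟨A, hA, hA0, hAv⟩ := hvV
    have h1 : (1 : ENNReal) ≤ (G₁.index : ENNReal) * μ A := hlow A hA hA0
    have h2 : (G₁.index : ENNReal) * μ A < (G₁.index : ENNReal) * (G₁.index : ENNReal)⁻¹ :=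
      (ENNReal.mul_lt_mul_iff_right hm0 hmtop).mpr (hAv ▸ hv)
    rw [ENNReal.mul_inv_cancel hm0 hmtop] at h2
    exact absurd (h1.trans_lt h2) (lt_irrefl _)
  -- pick an "atom": a nonnull invariant set of measure < 2α
  have hαlt : α < α + α :=
    ENNReal.lt_add_right (ne_top_of_le_ne_top ENNReal.one_ne_top hα1) hαpos
  obtain ⟨v, hvV, hvlt⟩ := sInf_lt_iff.mp (hα ▸ hαlt)
  obtain ⟨A₀, hA₀inv, hA₀0, hA₀v⟩ := hvV
  have hA₀lt : μ A₀ < α + α := hA₀v ▸ hvlt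
  -- splitting dichotomy inside a small invariant set
  have hsplit : ∀ W C : Set X, Inv W → Inv C → μ W < α + α → C ⊆ W →
      μ C = 0 ∨ μ (W \ C) = 0 := by
    intro W C hW hC hWlt hsub
    by_contra hcon
    push_neg at hcon
    have h1 : α ≤ μ C := hαle C hC hcon.1
    have h2 : α ≤ μ (W \ C) := hαle _ (hInvDiff W C hW hC) hcon.2
    have h3 : μ (W ∩ C) + μ (W \ C) = μ W := measure_inter_add_diff W hC.1
    rw [Set.inter_eq_self_of_subset_right hsub] at h3
    exact absurd (h3 ▸ add_le_add h1 h2) (not_le.mpr hWlt)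
  -- the cells
  set Pfun : G ⧸ G₁ → Set X := fun q => T (Quotient.out q) ⁻¹' A₀ with hPfun
  have hPinv : ∀ q, Inv (Pfun q) := fun q => hInvPre A₀ hA₀inv _
  have hPμ : ∀ q, μ (Pfun q) = μ A₀ := fun q => hmeasP A₀ hA₀inv.1 _
  have hdich : ∀ q q' : G ⧸ G₁, Pfun q =ᵐ[μ] Pfun q' ∨ μ (Pfun q ∩ Pfun q') = 0 := by
    intro q q'
    by_cases h0 : μ (Pfun q ∩ Pfun q') = 0
    · exact Or.inr h0
    · left
      have hCinv : Inv (Pfun q ∩ Pfun q') := hInvInter _ _ (hPinv q) (hPinv q')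
      have hd1 : μ (Pfun q \ Pfun q') = 0 := by
        rcases hsplit (Pfun q) (Pfun q ∩ Pfun q') (hPinv q) hCinv
          ((hPμ q) ▸ hA₀lt) Set.inter_subset_left with h | h
        · exact absurd h h0
        · rwa [Set.diff_self_inter] at h
      have hd2 : μ (Pfun q' \ Pfun q) = 0 := by
        rcases hsplit (Pfun q') (Pfun q' ∩ Pfun q) (hPinv q')
          (hInvInter _ _ (hPinv q') (hPinv q)) ((hPμ q') ▸ hA₀lt)
          Set.inter_subset_left with h | h
        · rw [Set.inter_comm] at h; exact absurd h h0
        · rwa [Set.diff_self_inter] at h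
      exact ae_eq_set.mpr ⟨hd1, hd2⟩
  -- the quotient identifying a.e. equal cells
  letI r : Setoid (G ⧸ G₁) :=
    ⟨fun q q' => Pfun q =ᵐ[μ] Pfun q',
     ⟨fun _ => Filter.EventuallyEq.rfl, fun h => h.symm, fun h1 h2 => h1.trans h2⟩⟩
  haveI : Finite (Quotient r) := Quotient.finite _
  haveI : Fintype (Quotient r) := Fintype.ofFinite _
  set n : ℕ := Fintype.card (Quotient r) with hn
  set e : Fin n ≃ Quotient r := (Fintype.equivFin (Quotient r)).symm with he
  refine ⟨n, fun i => Pfun (Quotient.out (e i)), ?_, ?_, ?_, ?_, ?_, ?_, ?_⟩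
  · -- 0 < n
    haveI : Nonempty (Quotient r) := ⟨Quotient.mk r ((1 : G) : G ⧸ G₁)⟩
    exact Fintype.card_pos
  · -- measurability
    exact fun i => (hPinv _).1
  · -- pairwise a.e. disjoint
    intro i j hij
    rcases hdich (Quotient.out (e i)) (Quotient.out (e j)) with hae | h0
    · exfalso
      apply hij
      apply e.injective
      rw [← Quotient.out_eq (e i), ← Quotient.out_eq (e j)]
      exact Quotient.sound hae
    · exact h0
  · -- full measure union
    have h1 : μ (⋃ q : G ⧸ G₁, Pfun q) = 1 := hBig A₀ hA₀inv hA₀0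
    have h2 : (⋃ q : G ⧸ G₁, Pfun q) =ᵐ[μ]
        ⋃ q : G ⧸ G₁, Pfun (Quotient.out (Quotient.mk r q)) :=
      EventuallyEq.countable_iUnion fun q => Setoid.symm (Quotient.mk_out (s := r) q)
    have h3 : (⋃ q : G ⧸ G₁, Pfun (Quotient.out (Quotient.mk r q))) =
        ⋃ c : Quotient r, Pfun (Quotient.out c) := by
      exact Function.Surjective.iUnion_comp
        (fun c => ⟨Quotient.out c, Quotient.out_eq c⟩) fun c => Pfun (Quotient.out c)
    have h4 : (⋃ c : Quotient r, Pfun (Quotient.out c)) =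
        ⋃ i, Pfun (Quotient.out (e i)) :=
      (e.surjective.iUnion_comp fun c => Pfun (Quotient.out c)).symm
    calc μ (⋃ i, Pfun (Quotient.out (e i)))
        = μ (⋃ q : G ⧸ G₁, Pfun q) := by
          rw [← h4, ← h3]; exact (measure_congr h2).symm
      _ = 1 := h1
  · -- equal measures
    intro i j
    rw [hPμ, hPμ]
  · -- invariance of each cell
    intro i h hh
    exact measure_symmDiff_eq_zero_iff.mpr ((hPinv _).2 h hh)
  · -- ergodicity of the restricted action on each cell
    intro i A hsub hAmeas hAcond
    set W := Pfun (Quotient.out (e i)) with hW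
    have hWmeas : MeasurableSet W := (hPinv _).1
    have hWμ : μ W = μ A₀ := hPμ _
    have hW0 : μ W ≠ 0 := by rw [hWμ]; exact hA₀0
    have hWtop : μ W ≠ ⊤ := measure_ne_top μ W
    -- A is invariant
    have hAinv : Inv A := by
      refine ⟨hAmeas, fun h hh => ?_⟩
      rw [← measure_symmDiff_eq_zero_iff]
      have hc := hAcond h hh
      rw [ProbabilityTheory.cond_apply hWmeas] at hc
      have hin : μ (W ∩ symmDiff (T h ⁻¹' A) A) = 0 := by
        rcases (mul_eq_zero.mp hc) with h' | h'
        · exact absurd h' (ENNReal.inv_ne_zero.mpr hWtop)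
        · exact h'
      have hout : μ (symmDiff (T h ⁻¹' A) A \ W) = 0 := by
        have hsub2 : symmDiff (T h ⁻¹' A) A \ W ⊆ T h ⁻¹' W \ W := by
          intro x hx
          rcases hx with ⟨hx1, hx2⟩
          rcases hx1 with ⟨hx3, _⟩ | ⟨hx3, _⟩
          · exact ⟨hsub hx3, hx2⟩
          · exact absurd (hsub hx3) hx2
        refine le_antisymm ?_ (zero_le)
        calc μ (symmDiff (T h ⁻¹' A) A \ W) ≤ μ (T h ⁻¹' W \ W) := measure_mono hsub2
          _ ≤ μ (symmDiff (T h ⁻¹' W) W) := by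
              rw [symmDiff_def]; exact measure_mono le_sup_left
          _ = 0 := measure_symmDiff_eq_zero_iff.mpr ((hPinv _).2 h hh)
      have hle : μ (symmDiff (T h ⁻¹' A) A) ≤ 0 := by
        calc μ (symmDiff (T h ⁻¹' A) A)
            ≤ μ (symmDiff (T h ⁻¹' A) A ∩ W) + μ (symmDiff (T h ⁻¹' A) A \ W) :=
              measure_le_inter_add_diff _ _ _
          _ = 0 := by rw [Set.inter_comm, hin, hout, add_zero]
      exact le_antisymm hle (zero_le)
    have hWA : W ∩ A = A := Set.inter_eq_self_of_subset_right hsub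
    by_cases hA0 : μ A = 0
    · left
      rw [ProbabilityTheory.cond_apply hWmeas, hWA, hA0, mul_zero]
    · right
      rcases hsplit W A (hPinv _) hAinv (hWμ ▸ hA₀lt) hsub with h | h
      · exact absurd h hA0
      · have h3 : μ (W ∩ A) + μ (W \ A) = μ W := measure_inter_add_diff W hAmeas
        rw [h, add_zero] at h3
        rw [ProbabilityTheory.cond_apply hWmeas, h3,
          ENNReal.inv_mul_cancel hW0 hWtop]
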